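/- Let N_n be the symmetric Nakayama algebra on the cyclic quiver with n vertices modulo paths of length n+1, let M ⊆ {1,…,n} with |M| = m, and let e = Σ_{i∈M} e_i. Then e N_n e ≅ N_m as algebras. -/

import Mathlib

/-- Paths of a quiver, bundled with their endpoints. -/
abbrev PathIdx (V : Type) [Quiver.{0} V] := Σ a b : V, Quiver.Path a b

/-- The path algebra `FQ`: the vector space with basis the paths of the quiver. -/
abbrev PathAlg (F : Type) [Field F] (V : Type) [Quiver.{0} V] := PathIdx V →₀ F

/-- Composition of composable bundled paths. -/
def pcomp {V : Type} [Quiver.{0} V] (p q : PathIdx V) (h : p.2.1 = q.1) : PathIdx V :=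
  ⟨p.1, q.2.1, p.2.2.comp (q.2.2.cast h.symm rfl)⟩

/-- Multiplication of the path algebra: composition of composable paths, `0` otherwise. -/
noncomputable def pmul {F : Type} [Field F] {V : Type} [Quiver.{0} V] [DecidableEq V]
    (x y : PathAlg F V) : PathAlg F V :=
  x.sum fun p cp => y.sum fun q cq =>
    if h : p.2.1 = q.1 then Finsupp.single (pcomp p q h) (cp * cq) else 0

/-- The unit of the path algebra: the sum of the trivial paths at the vertices. -/
noncomputable def pone (F : Type) [Field F] (V : Type) [Quiver.{0} V] [Fintype V] :
    PathAlg F V :=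
  ∑ a : V, Finsupp.single (⟨a, a, Quiver.Path.nil⟩ : PathIdx V) 1

/-- `π : FQ → Λ` presents the algebra `Λ` as the quotient of the path algebra of the
quiver by the two-sided ideal generated by the relation set `Rel`. -/
def IsPresentation {F : Type} [Field F] {V : Type} [Quiver.{0} V] [DecidableEq V] [Fintype V]
    {Λ : Type} [Ring Λ] [Algebra F Λ] (π : PathAlg F V → Λ) (Rel : Set (PathAlg F V)) :
    Prop :=
  (∀ x y, π (x + y) = π x + π y) ∧
  (∀ (c : F) (x), π (c • x) = c • π x) ∧
  (∀ x y, π (pmul x y) = π x * π y) ∧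
  π (pone F V) = 1 ∧
  Function.Surjective π ∧
  ∀ x, π x = 0 ↔ x ∈ Submodule.span F {y | ∃ a b, ∃ r ∈ Rel, y = pmul a (pmul r b)}
/-- The cyclic quiver on `n` vertices: one arrow `a → a + 1` for each vertex. -/
def CycV (n : ℕ) : Type := Fin n

/-- View a vertex of the cyclic quiver as an element of `Fin n`. -/
def CycV.t {n : ℕ} (a : CycV n) : Fin n := a

/-- View an element of `Fin n` as a vertex of the cyclic quiver. -/
def CycV.of {n : ℕ} (a : Fin n) : CycV n := a

instance (n : ℕ) [NeZero n] : Quiver.{0} (CycV n) :=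
  ⟨fun a b => PLift (b.t = a.t + 1)⟩

instance (n : ℕ) : DecidableEq (CycV n) := inferInstanceAs (DecidableEq (Fin n))
instance (n : ℕ) : Fintype (CycV n) := inferInstanceAs (Fintype (Fin n))

/-- The relations of the Nakayama algebra `N_n`: all paths of length `n+1`. -/
def RelCyc (F : Type) [Field F] (n : ℕ) [NeZero n] : Set (PathAlg F (CycV n)) :=
  {x | ∃ p : PathIdx (CycV n), p.2.2.length = n + 1 ∧ x = Finsupp.single p 1}

open Fin.NatCast Fin.CommRing

section PathLemmas

variable {n : ℕ} [NeZero n]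

instance (a b : CycV n) : Subsingleton (a ⟶ b) := ⟨fun ⟨x⟩ ⟨y⟩ => by congr 1⟩

@[simp] lemma path_cast_length {V : Type} [Quiver.{0} V] {a b a' b' : V}
    (hu : a = a') (hv : b = b') (p : Quiver.Path a b) :
    (p.cast hu hv).length = p.length := by subst hu; subst hv; rfl

/-- The canonical path from `a` of length `l` in the cyclic quiver. -/
def pathTo (a : Fin n) : (l : ℕ) → Quiver.Path (CycV.of a) (CycV.of (a + (l : Fin n)))
  | 0 => Quiver.Path.nil.cast rfl (by simp [CycV.of]; rfl)
  | l+1 => (pathTo a l).cons ⟨show a + ((l+1 : ℕ) : Fin n) = a + (l : Fin n) + 1 by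
      push_cast; ring⟩

@[simp] lemma pathTo_length (a : Fin n) (l : ℕ) : (pathTo a l).length = l := by
  induction l with
  | zero => simp [pathTo]
  | succ l ih => simp [pathTo, ih]

/-- The bundled canonical path. -/
def toIdx (a : Fin n) (l : ℕ) : PathIdx (CycV n) :=
  ⟨CycV.of a, CycV.of (a + (l : Fin n)), pathTo a l⟩

lemma toIdx_fst (a : Fin n) (l : ℕ) : (toIdx a l).1 = CycV.of a := rfl
lemma toIdx_snd (a : Fin n) (l : ℕ) : (toIdx a l).2.1 = CycV.of (a + (l : Fin n)) := rfl
@[simp] lemma toIdx_len (a : Fin n) (l : ℕ) : (toIdx a l).2.2.length = l := pathTo_length a l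

lemma arrow_heq {a b a' b' : CycV n} (h1 : a = a') (h2 : b = b')
    (e : a ⟶ b) (e' : a' ⟶ b') : HEq e e' := by
  subst h1; subst h2; exact heq_of_eq (Subsingleton.elim _ _)

lemma cons_heq {V : Type} [Quiver.{0} V] {a b b' c c' : V} (hb : b = b') (hc : c = c')
    (p : Quiver.Path a b) (p' : Quiver.Path a b') (e : b ⟶ c) (e' : b' ⟶ c')
    (hp : HEq p p') (he : HEq e e') : HEq (p.cons e) (p'.cons e') := by
  subst hb; subst hc; rw [eq_of_heq hp, eq_of_heq he]

lemma toIdx_class_aux (a b : CycV n) (q : Quiver.Path a b) :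
    b = CycV.of (a.t + (q.length : Fin n)) ∧ HEq q (pathTo a.t q.length) := by
  induction q with
  | nil =>
    have h : a = CycV.of (a.t + ((0:ℕ) : Fin n)) := by rw [Nat.cast_zero, add_zero]; rfl
    exact ⟨h, ((Quiver.Path.cast_heq rfl h Quiver.Path.nil).symm : _)⟩
  | cons q ar ih =>
    rename_i b c
    obtain ⟨hb, hq⟩ := ih
    have hc : c = CycV.of (a.t + ((q.length + 1 : ℕ) : Fin n)) := by
      have h2 := ar.down
      have h3 : b.t = a.t + (q.length : Fin n) := congrArg CycV.t hb
      have h4 : c.t = a.t + ((q.length + 1 : ℕ) : Fin n) := by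
        rw [h2, h3]; push_cast; ring
      exact h4
    refine ⟨hc, ?_⟩
    show HEq (q.cons ar) ((pathTo a.t q.length).cons _)
    exact cons_heq hb hc _ _ _ _ hq (arrow_heq hb hc _ _)

/-- Classification: every bundled path is a canonical path. -/
lemma toIdx_class (p : PathIdx (CycV n)) : p = toIdx (p.1.t) (p.2.2.length) := by
  obtain ⟨a, b, q⟩ := p
  obtain ⟨hb, hq⟩ := toIdx_class_aux a b q
  exact Sigma.ext rfl (heq_of_eq (Sigma.ext hb hq))

lemma toIdx_inj {a a' : Fin n} {l l' : ℕ} (h : toIdx a l = toIdx a' l') : a = a' ∧ l = l' := by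
  constructor
  · exact congrArg (fun p => (Sigma.fst p).t) h
  · have := congrArg (fun p : PathIdx (CycV n) => p.2.2.length) h
    simpa using this

end PathLemmas

section PmulLemmas

variable {F : Type} [Field F] {V : Type} [Quiver.{0} V] [DecidableEq V]

lemma pmul_single_single (p q : PathIdx V) (c d : F) :
    pmul (Finsupp.single p c) (Finsupp.single q d) =
      if h : p.2.1 = q.1 then Finsupp.single (pcomp p q h) (c * d) else 0 := by
  unfold pmul
  rw [Finsupp.sum_single_index, Finsupp.sum_single_index]
  · simp
  · simp

lemma pmul_add_left (x y z : PathAlg F V) : pmul (x + y) z = pmul x z + pmul y z := by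
  unfold pmul
  rw [Finsupp.sum_add_index' (fun p => by simp)]
  intro p c1 c2
  rw [← Finsupp.sum_add]
  apply Finsupp.sum_congr
  intro q _
  by_cases h : p.2.1 = q.1
  · rw [dif_pos h, dif_pos h, dif_pos h, add_mul, Finsupp.single_add]
  · rw [dif_neg h, dif_neg h, dif_neg h, add_zero]

lemma pmul_add_right (x y z : PathAlg F V) : pmul x (y + z) = pmul x y + pmul x z := by
  unfold pmul
  rw [← Finsupp.sum_add]
  apply Finsupp.sum_congr
  intro p _
  rw [Finsupp.sum_add_index' (fun q => by simp)]
  intro q c1 c2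
  by_cases h : p.2.1 = q.1
  · rw [dif_pos h, dif_pos h, dif_pos h, mul_add, Finsupp.single_add]
  · rw [dif_neg h, dif_neg h, dif_neg h, add_zero]

lemma pmul_smul_left (c : F) (x y : PathAlg F V) : pmul (c • x) y = c • pmul x y := by
  unfold pmul
  rw [Finsupp.sum_smul_index (fun p => by simp), Finsupp.smul_sum]
  apply Finsupp.sum_congr
  intro p _
  rw [Finsupp.smul_sum]
  apply Finsupp.sum_congr
  intro q _
  by_cases h : p.2.1 = q.1
  · rw [dif_pos h, dif_pos h, Finsupp.smul_single, smul_eq_mul, mul_assoc]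
  · rw [dif_neg h, dif_neg h, smul_zero]

lemma pmul_smul_right (c : F) (x y : PathAlg F V) : pmul x (c • y) = c • pmul x y := by
  unfold pmul
  rw [Finsupp.smul_sum]
  apply Finsupp.sum_congr
  intro p _
  rw [Finsupp.sum_smul_index (fun q => by simp), Finsupp.smul_sum]
  apply Finsupp.sum_congr
  intro q _
  by_cases h : p.2.1 = q.1
  · rw [dif_pos h, dif_pos h, Finsupp.smul_single, smul_eq_mul]
    congr 1
    ring
  · rw [dif_neg h, dif_neg h, smul_zero]

/-- `pmul` as a bilinear map. -/
noncomputable def pmulBil : PathAlg F V →ₗ[F] PathAlg F V →ₗ[F] PathAlg F V :=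
  LinearMap.mk₂ F pmul pmul_add_left pmul_smul_left pmul_add_right pmul_smul_right

lemma pmulBil_apply (x y : PathAlg F V) : pmulBil x y = pmul x y := rfl

lemma pmul_zero_left (y : PathAlg F V) : pmul (0 : PathAlg F V) y = 0 := by
  rw [← pmulBil_apply]; simp

lemma pmul_zero_right (x : PathAlg F V) : pmul x (0 : PathAlg F V) = 0 := by
  rw [← pmulBil_apply]; simp

end PmulLemmas

section MulRule

variable {F : Type} [Field F] {n : ℕ} [NeZero n]

lemma pcomp_toIdx (i j : Fin n) (l k : ℕ) (h : (toIdx i l).2.1 = (toIdx j k).1) :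
    pcomp (toIdx i l) (toIdx j k) h = toIdx i (l + k) := by
  have h1 : (pcomp (toIdx i l) (toIdx j k) h).1 = CycV.of i := rfl
  have h2 : (pcomp (toIdx i l) (toIdx j k) h).2.2.length = l + k := by
    show (Quiver.Path.comp _ _).length = l + k
    erw [Quiver.Path.length_comp, path_cast_length]
    simp
    exact toIdx_len i l
  rw [toIdx_class (pcomp (toIdx i l) (toIdx j k) h), h2]
  rfl

lemma of_inj {a b : Fin n} (h : CycV.of a = CycV.of b) : a = b := h

lemma pmul_toIdx_toIdx (i j : Fin n) (l k : ℕ) (c d : F) :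
    pmul (Finsupp.single (toIdx i l) c) (Finsupp.single (toIdx j k) d) =
      if j = i + (l : Fin n) then Finsupp.single (toIdx i (l + k)) (c * d) else 0 := by
  rw [pmul_single_single]
  by_cases hj : j = i + (l : Fin n)
  · rw [dif_pos, if_pos hj]
    · congr 1
      apply pcomp_toIdx
    · show CycV.of (i + (l : Fin n)) = CycV.of j
      rw [hj]
  · rw [dif_neg, if_neg hj]
    intro hc
    exact hj (of_inj hc).symm

end MulRule

section SuppLemmas

variable {F : Type} [Field F] {V : Type} [Quiver.{0} V] [DecidableEq V]

lemma pcomp_length (p q : PathIdx V) (h : p.2.1 = q.1) :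
    (pcomp p q h).2.2.length = p.2.2.length + q.2.2.length := by
  show (Quiver.Path.comp _ _).length = _
  erw [Quiver.Path.length_comp, path_cast_length]
  rfl

lemma pmul_support_sub (x y : PathAlg F V) (L : ℕ)
    (hy : ∀ q ∈ y.support, L ≤ q.2.2.length) :
    ∀ r ∈ (pmul x y).support, L ≤ r.2.2.length := by
  classical
  intro r hr
  unfold pmul at hr
  have h1 := Finsupp.support_sum hr
  rw [Finset.mem_biUnion] at h1
  obtain ⟨p, _, hp2⟩ := h1
  have h2 := Finsupp.support_sum hp2
  rw [Finset.mem_biUnion] at h2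
  obtain ⟨q, hq1, hq2⟩ := h2
  by_cases h : p.2.1 = q.1
  · rw [dif_pos h] at hq2
    have := Finsupp.support_single_subset hq2
    rw [Finset.mem_singleton] at this
    subst this
    rw [pcomp_length]
    have := hy q hq1
    omega
  · rw [dif_neg h] at hq2
    simp at hq2

lemma pmul_support_sub_left (x y : PathAlg F V) (L : ℕ)
    (hx : ∀ p ∈ x.support, L ≤ p.2.2.length) :
    ∀ r ∈ (pmul x y).support, L ≤ r.2.2.length := by
  classical
  intro r hr
  unfold pmul at hr
  have h1 := Finsupp.support_sum hr
  rw [Finset.mem_biUnion] at h1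
  obtain ⟨p, hp1, hp2⟩ := h1
  have h2 := Finsupp.support_sum hp2
  rw [Finset.mem_biUnion] at h2
  obtain ⟨q, hq1, hq2⟩ := h2
  by_cases h : p.2.1 = q.1
  · rw [dif_pos h] at hq2
    have := Finsupp.support_single_subset hq2
    rw [Finset.mem_singleton] at this
    subst this
    rw [pcomp_length]
    have := hx p hp1
    omega
  · rw [dif_neg h] at hq2
    simp at hq2

end SuppLemmas

section Present

variable {F : Type} [Field F] {n : ℕ} [NeZero n] {N : Type} [Ring N] [Algebra F N]
  {π : PathAlg F (CycV n) → N}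

/-- The presentation map as a linear map. -/
def πlin (hπ : IsPresentation π (RelCyc F n)) : PathAlg F (CycV n) →ₗ[F] N :=
  ⟨⟨π, hπ.1⟩, fun c x => hπ.2.1 c x⟩

lemma πlin_apply (hπ : IsPresentation π (RelCyc F n)) (x) : πlin hπ x = π x := rfl

lemma gen_supported (hπ : IsPresentation π (RelCyc F n)) :
    {y : PathAlg F (CycV n) | ∃ a b, ∃ r ∈ RelCyc F n, y = pmul a (pmul r b)} ⊆
      Finsupp.supported F F {p : PathIdx (CycV n) | n + 1 ≤ p.2.2.length} := by
  rintro y ⟨a, b, r, ⟨p0, hp0, rfl⟩, rfl⟩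
  rw [SetLike.mem_coe, Finsupp.mem_supported]
  intro q hq
  refine pmul_support_sub a _ (n+1) ?_ q hq
  intro q' hq'
  refine pmul_support_sub_left _ b (n+1) ?_ q' hq'
  intro p hp
  have := Finsupp.support_single_subset hp
  rw [Finset.mem_singleton] at this
  subst this
  omega

lemma ker_supported (hπ : IsPresentation π (RelCyc F n)) {x : PathAlg F (CycV n)}
    (hx : π x = 0) : x ∈ Finsupp.supported F F {p : PathIdx (CycV n) | n + 1 ≤ p.2.2.length} := by
  have h := (hπ.2.2.2.2.2 x).mp hx
  exact Submodule.span_le.mpr (gen_supported hπ) h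

/-- Z1 : long paths die. -/
lemma π_long_zero (hπ : IsPresentation π (RelCyc F n)) (i : Fin n) (l : ℕ) (c : F)
    (hl : n + 1 ≤ l) : π (Finsupp.single (toIdx i l) c) = 0 := by
  apply (hπ.2.2.2.2.2 _).mpr
  apply Submodule.subset_span
  refine ⟨Finsupp.single (toIdx i 0) c,
    Finsupp.single (toIdx (i + ((n+1 : ℕ) : Fin n)) (l - (n+1))) 1,
    Finsupp.single (toIdx i (n+1)) 1, ⟨toIdx i (n+1), by simp, rfl⟩, ?_⟩
  rw [pmul_toIdx_toIdx, if_pos rfl, pmul_toIdx_toIdx, if_pos (by simp)]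
  congr 1
  · congr 1
    omega
  · norm_num

/-- Z2 : injectivity on short paths. -/
lemma π_short_inj (hπ : IsPresentation π (RelCyc F n)) {x : PathAlg F (CycV n)}
    (hgood : x ∈ Finsupp.supported F F {p : PathIdx (CycV n) | p.2.2.length ≤ n})
    (hx : π x = 0) : x = 0 := by
  have hbad := ker_supported hπ hx
  rw [Finsupp.mem_supported] at hgood hbad
  rw [← Finsupp.support_eq_empty]
  rw [Finset.eq_empty_iff_forall_notMem]
  intro p hp
  have h1 := hgood hp
  have h2 := hbad hp
  simp only [Set.mem_setOf_eq] at h1 h2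
  omega

end Present

section Comb

variable {n m : ℕ} [NeZero n]

lemma fin_shift_inj {i : Fin n} {d d' : ℕ} (hd : d < n) (hd' : d' < n)
    (h : i + ((d+1:ℕ) : Fin n) = i + ((d'+1:ℕ) : Fin n)) : d = d' := by
  have hv : (d+1) % n = (d'+1) % n := by
    have h2 := add_left_cancel h
    have h3 : ((d+1:ℕ) : Fin n).val = ((d'+1:ℕ) : Fin n).val := congrArg Fin.val h2
    rw [Fin.val_natCast, Fin.val_natCast] at h3
    exact h3
  rcases Nat.lt_or_ge (d+1) n with h1 | h1 <;> rcases Nat.lt_or_ge (d'+1) n with h2 | h2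
  · rw [Nat.mod_eq_of_lt h1, Nat.mod_eq_of_lt h2] at hv; omega
  · have he : d' + 1 = n := by omega
    rw [Nat.mod_eq_of_lt h1, he, Nat.mod_self] at hv; omega
  · have he : d + 1 = n := by omega
    rw [he, Nat.mod_self, Nat.mod_eq_of_lt h2] at hv; omega
  · omega

lemma fin_shift_exists (i j : Fin n) : ∃ d, d < n ∧ i + ((d+1:ℕ) : Fin n) = j := by
  refine ⟨(j - i - 1).val, (j - i - 1).isLt, ?_⟩
  push_cast [Fin.cast_val_eq_self]
  ring

/-- number of `M`-points in the cyclic interval `(i, i+l]`. -/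
def cnt (M : Finset (Fin n)) (i : Fin n) (l : ℕ) : ℕ :=
  ((Finset.range l).filter (fun t => (i + ((t+1 : ℕ) : Fin n)) ∈ M)).card

variable (M : Finset (Fin n))

lemma cnt_zero (i : Fin n) : cnt M i 0 = 0 := by simp [cnt]

lemma cnt_step (i : Fin n) (l : ℕ) :
    cnt M i (l+1) = cnt M i l + (if (i + ((l+1:ℕ) : Fin n)) ∈ M then 1 else 0) := by
  unfold cnt
  rw [Finset.range_add_one, Finset.filter_insert]
  split
  · rw [Finset.card_insert_of_notMem (by simp)]
  · simp

lemma cnt_add (i : Fin n) (l k : ℕ) :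
    cnt M i (l + k) = cnt M i l + cnt M (i + (l : Fin n)) k := by
  induction k with
  | zero => simp [cnt_zero]
  | succ k ih =>
    rw [← add_assoc, cnt_step, ih, cnt_step]
    have harg : (i + (l : Fin n)) + ((k+1:ℕ) : Fin n) = i + ((l + k + 1 : ℕ) : Fin n) := by
      push_cast; ring
    rw [harg, add_assoc]

lemma cnt_mono (i : Fin n) {l l' : ℕ} (h : l ≤ l') : cnt M i l ≤ cnt M i l' := by
  have : l' = l + (l' - l) := by omega
  rw [this, cnt_add]
  omega

lemma cnt_full (i : Fin n) : cnt M i n = M.card := by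
  unfold cnt
  apply Finset.card_bij' (fun t _ => i + ((t+1:ℕ) : Fin n))
    (fun j _ => (j - i - 1).val)
  · intro t ht
    exact (Finset.mem_filter.mp ht).2
  · intro j hj
    rw [Finset.mem_filter]
    constructor
    · exact Finset.mem_range.mpr (j - i - 1).isLt
    · have : i + (((j - i - 1).val + 1 : ℕ) : Fin n) = j := by
        push_cast [Fin.cast_val_eq_self]; ring
      rw [this]; exact hj
  · intro t ht
    have ht2 := Finset.mem_range.mp (Finset.mem_filter.mp ht).1
    have he : i + ((t+1:ℕ) : Fin n) - i - 1 = ((t:ℕ) : Fin n) := by push_cast; ring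
    rw [he, Fin.val_cast_of_lt ht2]
  · intro j hj
    push_cast [Fin.cast_val_eq_self]
    ring

lemma cnt_pos (i : Fin n) {l : ℕ} (hl : 1 ≤ l) (hend : i + (l : Fin n) ∈ M) :
    1 ≤ cnt M i l := by
  have hmem : l - 1 ∈ (Finset.range l).filter (fun t => (i + ((t+1:ℕ) : Fin n)) ∈ M) := by
    rw [Finset.mem_filter]
    refine ⟨Finset.mem_range.mpr (by omega), ?_⟩
    have he : l - 1 + 1 = l := by omega
    rw [he]
    exact hend
  exact Finset.card_pos.mpr ⟨_, hmem⟩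

lemma cnt_long (i : Fin n) {l : ℕ} (hl : n + 1 ≤ l) (hend : i + (l : Fin n) ∈ M) :
    M.card + 1 ≤ cnt M i l := by
  have hdec : l = n + (l - n) := by omega
  have h1 : cnt M i l = M.card + cnt M i (l - n) := by
    rw [hdec, cnt_add]
    have h2 : (i + ((n:ℕ) : Fin n)) = i := by simp
    have h3 : n + (l - n) - n = l - n := by omega
    rw [h2, cnt_full, h3]
  have hend' : i + ((l - n : ℕ) : Fin n) ∈ M := by
    have : ((l - n : ℕ) : Fin n) = (l : Fin n) := by
      rw [Nat.cast_sub (by omega)]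
      simp
    rw [this]
    exact hend
  have := cnt_pos M i (l := l - n) (by omega) hend'
  omega

lemma cnt_strict (i : Fin n) {l l' : ℕ} (h : l < l') (hend : i + (l' : Fin n) ∈ M) :
    cnt M i l < cnt M i l' := by
  have hdec : l' = l + (l' - l) := by omega
  have h1 : cnt M i l' = cnt M i l + cnt M (i + (l : Fin n)) (l' - l) := by
    rw [hdec, cnt_add]
    have h3 : l + (l' - l) - l = l' - l := by omega
    rw [h3]
  have hend' : (i + (l : Fin n)) + ((l' - l : ℕ) : Fin n) ∈ M := by
    have he : (i + (l : Fin n)) + ((l' - l : ℕ) : Fin n) = i + (l' : Fin n) := by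
      rw [Nat.cast_sub (by omega)]
      ring
    rw [he]; exact hend
  have := cnt_pos M (i + (l : Fin n)) (l := l' - l) (by omega) hend'
  omega

/-- Existence of a canonical length realizing each count, with endpoint in `M`. -/
lemma cnt_exists (i : Fin n) (hi : i ∈ M) {k : ℕ} (hk : k ≤ M.card) :
    ∃ l, l ≤ n ∧ cnt M i l = k ∧ i + (l : Fin n) ∈ M := by
  have haux : ∀ L k', k' ≤ cnt M i L → ∃ l, l ≤ L ∧ cnt M i l = k' := by
    intro L
    induction L with
    | zero => intro k' hk'; rw [cnt_zero] at hk'; exact ⟨0, le_refl 0, by rw [cnt_zero]; omega⟩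
    | succ L ih =>
      intro k' hk'
      by_cases hle : k' ≤ cnt M i L
      · obtain ⟨l, hl1, hl2⟩ := ih k' hle
        exact ⟨l, by omega, hl2⟩
      · refine ⟨L+1, le_refl _, ?_⟩
        have := cnt_step M i L
        split at this <;> omega
  have hex : ∃ l, cnt M i l = k := by
    obtain ⟨l, _, h2⟩ := haux n k (by rw [cnt_full]; omega)
    exact ⟨l, h2⟩
  classical
  set l := Nat.find hex with hldef
  have hfl : cnt M i l = k := Nat.find_spec hex
  have hmin : ∀ l', l' < l → cnt M i l' ≠ k := fun l' hl' => Nat.find_min hex hl'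
  rcases Nat.eq_zero_or_pos k with hk0 | hkpos
  · have : l = 0 := by
      by_contra hne
      exact hmin 0 (by omega) (by rw [cnt_zero]; omega)
    refine ⟨l, by omega, hfl, ?_⟩
    rw [this]
    simpa using hi
  · have hl1 : 1 ≤ l := by
      by_contra hne
      have hl0 : l = 0 := by omega
      rw [hl0, cnt_zero] at hfl
      omega
    have hlen : l ≤ n := by
      obtain ⟨l', hl1', hl2'⟩ := haux n k (by rw [cnt_full]; omega)
      have : l ≤ l' := by rw [hldef]; exact Nat.find_le hl2'
      omega
    have hprev : cnt M i (l-1) = k - 1 := by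
      have hstep := cnt_step M i (l-1)
      have hll : l - 1 + 1 = l := by omega
      rw [hll] at hstep
      have h2 : cnt M i (l-1) ≠ k := hmin (l-1) (by omega)
      have h3 : cnt M i (l-1) ≤ k := by rw [← hfl]; exact cnt_mono M i (by omega)
      split at hstep <;> omega
    refine ⟨l, hlen, hfl, ?_⟩
    by_contra hnot
    have hstep := cnt_step M i (l-1)
    have hll : l - 1 + 1 = l := by omega
    rw [hll, if_neg hnot] at hstep
    omega

end Comb

section OrderComb

variable {n m : ℕ} [NeZero n] [NeZero m] (M : Finset (Fin n)) (hM : M.card = m)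

/-- The increasing enumeration of `M`. -/
def iot (p : Fin m) : Fin n := ((M.orderIsoOfFin hM) p : Fin n)

/-- The position of an element of `M`. -/
def posM (i : Fin n) (hi : i ∈ M) : Fin m := (M.orderIsoOfFin hM).symm ⟨i, hi⟩

lemma iot_mem (p : Fin m) : iot M hM p ∈ M := ((M.orderIsoOfFin hM) p).2

lemma posM_iot (p : Fin m) (h : iot M hM p ∈ M) : posM M hM (iot M hM p) h = p := by
  unfold posM iot
  have he : (⟨((M.orderIsoOfFin hM) p : Fin n), h⟩ : {x // x ∈ M}) = (M.orderIsoOfFin hM) p :=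
    Subtype.ext rfl
  rw [he, OrderIso.symm_apply_apply]

lemma iot_posM (i : Fin n) (hi : i ∈ M) : iot M hM (posM M hM i hi) = i := by
  unfold posM iot
  rw [OrderIso.apply_symm_apply]

lemma posM_inj {i j : Fin n} (hi : i ∈ M) (hj : j ∈ M)
    (h : posM M hM i hi = posM M hM j hj) : i = j := by
  have := congrArg (iot M hM) h
  rwa [iot_posM, iot_posM] at this

lemma iot_lt_iff {p q : Fin m} : iot M hM p < iot M hM q ↔ p < q := by
  unfold iot
  rw [Subtype.coe_lt_coe]
  exact (M.orderIsoOfFin hM).lt_iff_lt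

lemma iot_inj {p q : Fin m} (h : iot M hM p = iot M hM q) : p = q := by
  rcases lt_trichotomy p q with hpq | hpq | hpq
  · exact absurd ((iot_lt_iff M hM).mpr hpq) (by rw [h]; exact lt_irrefl _)
  · exact hpq
  · exact absurd ((iot_lt_iff M hM).mpr hpq) (by rw [h]; exact lt_irrefl _)

lemma iot_le_iff {p q : Fin m} : iot M hM p ≤ iot M hM q ↔ p ≤ q := by
  unfold iot
  rw [Subtype.coe_le_coe]
  exact (M.orderIsoOfFin hM).le_iff_le

lemma posM_congr {i j : Fin n} (h : i = j) (hi : i ∈ M) (hj : j ∈ M) :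
    posM M hM i hi = posM M hM j hj := by subst h; rfl

/-- The gap to the next element of `M`. -/
def gapM (p : Fin m) : ℕ := (iot M hM (p+1) - iot M hM p - 1).val + 1

lemma gap_pos (p : Fin m) : 1 ≤ gapM M hM p := Nat.le_add_left 1 _

lemma gap_le_n (p : Fin m) : gapM M hM p ≤ n := by
  have := (iot M hM (p+1) - iot M hM p - 1).isLt
  unfold gapM
  omega

lemma gap_shift (p : Fin m) :
    iot M hM p + ((gapM M hM p : ℕ) : Fin n) = iot M hM (p+1) := by
  unfold gapM
  push_cast [Fin.cast_val_eq_self]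
  ring

lemma sub_one_val (i j : Fin n) :
    (j - i - 1).val = if i.val < j.val then j.val - i.val - 1 else j.val + n - i.val - 1 := by
  have hin : i.val < n := i.isLt
  have hjn : j.val < n := j.isLt
  split
  · rename_i h
    have he : j - i - 1 = ((j.val - i.val - 1 : ℕ) : Fin n) := by
      have h2 : (j.val - i.val - 1 : ℕ) = j.val - (i.val + 1) := by omega
      rw [h2, Nat.cast_sub (by omega)]
      push_cast [Fin.cast_val_eq_self]
      ring
    rw [he, Fin.val_cast_of_lt (by omega)]
  · rename_i h
    have he : j - i - 1 = ((j.val + n - i.val - 1 : ℕ) : Fin n) := by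
      have h2 : (j.val + n - i.val - 1 : ℕ) = (j.val + n) - (i.val + 1) := by omega
      rw [h2, Nat.cast_sub (by omega)]
      push_cast [Fin.cast_val_eq_self]
      have hn0 : ((n : ℕ) : Fin n) = 0 := by simp
      rw [hn0]
      ring
    rw [he, Fin.val_cast_of_lt (by omega)]

lemma fin_succ_val (p : Fin m) : ((p+1 : Fin m)).val = (p.val + 1) % m := by
  rw [Fin.add_def]
  simp [Fin.val_one', Nat.add_mod_mod]

lemma D_min (p q : Fin m) (hq : q ≠ p) :
    (iot M hM (p+1) - iot M hM p - 1).val ≤ (iot M hM q - iot M hM p - 1).val := by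
  have hm1 : p.val < m := p.isLt
  have hqm : q.val < m := q.isLt
  set a := (iot M hM p).val with ha
  set b := (iot M hM (p+1)).val with hb
  set c := (iot M hM q).val with hc
  have han : a < n := (iot M hM p).isLt
  have hbn : b < n := (iot M hM (p+1)).isLt
  have hcn : c < n := (iot M hM q).isLt
  have hac : a ≠ c := by
    intro h
    exact hq (iot_inj M hM (Fin.val_injective h.symm))
  rw [sub_one_val, sub_one_val]
  rcases Nat.lt_or_ge (p.val + 1) m with hcase | hcase
  · have hpn : ((p+1 : Fin m)).val = p.val + 1 := by
      rw [fin_succ_val, Nat.mod_eq_of_lt hcase]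
    have hab : a < b := by
      have : p < p + 1 := by rw [Fin.lt_def, hpn]; omega
      exact (iot_lt_iff M hM).mpr this
    rcases Nat.lt_or_ge a c with h1 | h1
    · have hpq : p < q := by
        have : iot M hM p < iot M hM q := by rw [Fin.lt_def]; exact h1
        exact (iot_lt_iff M hM).mp this
      have hle : p + 1 ≤ q := by
        rw [Fin.le_def, hpn]
        rw [Fin.lt_def] at hpq
        omega
      have hbc : b ≤ c := by
        have := (iot_le_iff M hM (p := p+1) (q := q)).mpr hle
        rw [Fin.le_def] at this
        exact this
      rw [if_pos h1, if_pos hab]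
      omega
    · have h1' : c < a := by omega
      rw [if_pos hab, if_neg (show ¬ a < c by omega)]
      omega
  · have hpeq : p.val + 1 = m := by omega
    have hpn : ((p+1 : Fin m)).val = 0 := by
      rw [fin_succ_val, hpeq, Nat.mod_self]
    have hqp : q < p := by
      rw [Fin.lt_def]
      have : q.val ≠ p.val := fun h => hq (Fin.val_injective h)
      omega
    have hca : c < a := by
      have := (iot_lt_iff M hM).mpr hqp
      rw [Fin.lt_def] at this
      exact this
    have hble : b ≤ c := by
      have h0q : (p+1 : Fin m) ≤ q := by
        rw [Fin.le_def, hpn]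
        omega
      have := (iot_le_iff M hM).mpr h0q
      rw [Fin.le_def] at this
      exact this
    rw [if_neg (show ¬ a < b by omega), if_neg (show ¬ a < c by omega)]
    omega

lemma gap_no_mid (p : Fin m) {t : ℕ} (h1 : 1 ≤ t) (h2 : t < gapM M hM p) :
    iot M hM p + ((t:ℕ) : Fin n) ∉ M := by
  intro hmem
  have htn : t < n := by
    have := gap_le_n M hM p
    omega
  set q := posM M hM _ hmem with hqdef
  have hq : iot M hM q = iot M hM p + ((t:ℕ) : Fin n) := iot_posM M hM _ hmem
  have hqne : q ≠ p := by
    intro h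
    rw [h] at hq
    have : ((t:ℕ) : Fin n) = 0 := by
      have := hq.symm
      rwa [add_eq_left] at this
    have hv := congrArg Fin.val this
    rw [Fin.val_cast_of_lt htn] at hv
    simp at hv
    omega
  have hD : (iot M hM q - iot M hM p - 1).val = t - 1 := by
    rw [hq]
    have he : iot M hM p + ((t:ℕ) : Fin n) - iot M hM p - 1 = ((t - 1 : ℕ) : Fin n) := by
      rw [Nat.cast_sub h1]
      push_cast
      ring
    rw [he, Fin.val_cast_of_lt (by omega)]
  have := D_min M hM p q hqne
  rw [hD] at this
  unfold gapM at h2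
  omega

lemma cnt_gap (p : Fin m) : cnt M (iot M hM p) (gapM M hM p) = 1 := by
  set g := gapM M hM p with hg
  have hg1 : 1 ≤ g := gap_pos M hM p
  have hdec : g = (g - 1) + 1 := by omega
  rw [hdec, cnt_step]
  have hzero : cnt M (iot M hM p) (g - 1) = 0 := by
    unfold cnt
    rw [Finset.card_eq_zero, Finset.filter_eq_empty_iff]
    intro t ht
    rw [Finset.mem_range] at ht
    exact gap_no_mid M hM p (by omega) (by omega)
  have hone : iot M hM p + ((g - 1 + 1 : ℕ) : Fin n) ∈ M := by
    have he : g - 1 + 1 = g := by omega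
    rw [he, hg, gap_shift]
    exact iot_mem M hM _
  rw [hzero, if_pos hone]

lemma pos_walk (l : ℕ) :
    ∀ (i : Fin n) (hi : i ∈ M) (hj : i + (l : Fin n) ∈ M),
      posM M hM i hi + ((cnt M i l : ℕ) : Fin m) = posM M hM (i + (l : Fin n)) hj := by
  induction l using Nat.strong_induction_on with
  | _ l IH =>
    intro i hi hj
    rcases Nat.eq_zero_or_pos l with h0 | hpos
    · subst h0
      rw [cnt_zero]
      have he : i + ((0:ℕ) : Fin n) = i := by simp
      rw [posM_congr M hM he hj hi]
      simp
    · set p := posM M hM i hi with hpdef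
      have hip : iot M hM p = i := iot_posM M hM i hi
      set g := gapM M hM p with hgdef
      have hg1 : 1 ≤ g := gap_pos M hM p
      have hgle : g ≤ l := by
        by_contra hcon
        have hz : cnt M i l = 0 := by
          unfold cnt
          rw [Finset.card_eq_zero, Finset.filter_eq_empty_iff]
          intro t ht
          rw [Finset.mem_range] at ht
          have := gap_no_mid M hM p (t := t+1) (by omega) (by omega)
          rwa [hip] at this
        have := cnt_pos M i hpos hj
        omega
      have hshift : i + ((g:ℕ) : Fin n) = iot M hM (p+1) := by
        rw [← hip, gap_shift]
      have hend_eq : iot M hM (p+1) + ((l - g : ℕ) : Fin n) = i + (l : Fin n) := by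
        rw [← hshift, Nat.cast_sub hgle]
        ring
      have hend' : iot M hM (p+1) + ((l - g : ℕ) : Fin n) ∈ M := by
        rw [hend_eq]; exact hj
      have hdecomp : cnt M i l = 1 + cnt M (iot M hM (p+1)) (l - g) := by
        have h3 : l = g + (l - g) := by omega
        conv_lhs => rw [h3]
        rw [cnt_add, hshift]
        have h4 : cnt M i g = 1 := by rw [← hip]; exact cnt_gap M hM p
        rw [h4]
      have hIH := IH (l - g) (by omega) (iot M hM (p+1)) (iot_mem M hM _) hend'
      rw [posM_iot] at hIH
      rw [hdecomp, ← posM_congr M hM hend_eq hend', ← hIH]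
      push_cast
      ring

end OrderComb

section Main

variable {F : Type} [Field F] {n m : ℕ} [NeZero n] [NeZero m]
  (M : Finset (Fin n)) (hM : M.card = m)

/-- The idempotent in the path algebra. -/
noncomputable def eA (F : Type) [Field F] (M : Finset (Fin n)) : PathAlg F (CycV n) :=
  ∑ i ∈ M, Finsupp.single (toIdx i 0) 1

lemma toIdx_zero (i : Fin n) :
    toIdx i 0 = (⟨CycV.of i, CycV.of i, Quiver.Path.nil⟩ : PathIdx (CycV n)) :=
  (toIdx_class ⟨CycV.of i, CycV.of i, Quiver.Path.nil⟩).symm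

/-- The index-level corner-counting map. -/
noncomputable def gmap (p : PathIdx (CycV n)) : PathAlg F (CycV m) :=
  if h : p.1.t ∈ M ∧ p.2.1.t ∈ M then
    Finsupp.single (toIdx (posM M hM p.1.t h.1) (cnt M p.1.t p.2.2.length)) 1
  else 0

/-- The corner-counting linear map. -/
noncomputable def rho : PathAlg F (CycV n) →ₗ[F] PathAlg F (CycV m) :=
  Finsupp.lsum F fun p => LinearMap.toSpanSingleton F _ (gmap M hM p)

lemma rho_single (p : PathIdx (CycV n)) (c : F) :
    rho (F := F) M hM (Finsupp.single p c) = c • gmap M hM p := by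
  unfold rho
  rw [Finsupp.lsum_single]
  rfl

lemma toIdx_fst_t (i : Fin n) (l : ℕ) : (toIdx i l).1.t = i := rfl
lemma toIdx_snd_t (i : Fin n) (l : ℕ) : (toIdx i l).2.1.t = i + (l : Fin n) := rfl

lemma rho_single_mem (i : Fin n) (l : ℕ) (c : F) (hi : i ∈ M) (hj : i + (l : Fin n) ∈ M) :
    rho (F := F) M hM (Finsupp.single (toIdx i l) c) =
      Finsupp.single (toIdx (posM M hM i hi) (cnt M i l)) c := by
  rw [rho_single]
  unfold gmap
  rw [dif_pos (⟨hi, hj⟩ : (toIdx i l).1.t ∈ M ∧ (toIdx i l).2.1.t ∈ M)]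
  rw [toIdx_len]
  rw [Finsupp.smul_single, smul_eq_mul, mul_one]
  show Finsupp.single (toIdx (posM M hM i hi) (cnt M i l)) c = _
  rfl

lemma rho_single_notmem (i : Fin n) (l : ℕ) (c : F)
    (h : ¬ (i ∈ M ∧ i + (l : Fin n) ∈ M)) :
    rho (F := F) M hM (Finsupp.single (toIdx i l) c) = 0 := by
  rw [rho_single]
  unfold gmap
  rw [dif_neg]
  · rw [smul_zero]
  · exact h

variable {N : Type} [Ring N] [Algebra F N] {πn : PathAlg F (CycV n) → N}
variable {Nm : Type} [Ring Nm] [Algebra F Nm] {πm : PathAlg F (CycV m) → Nm}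

lemma pi_rho_single_long (hπm : IsPresentation πm (RelCyc F m))
    (p : PathIdx (CycV n)) (hp : n + 1 ≤ p.2.2.length) (c : F) :
    πm (rho (F := F) M hM (Finsupp.single p c)) = 0 := by
  rw [toIdx_class p]
  set i := p.1.t
  set l := p.2.2.length
  by_cases h : i ∈ M ∧ i + (l : Fin n) ∈ M
  · rw [rho_single_mem M hM i l c h.1 h.2]
    apply π_long_zero hπm
    have := cnt_long M i hp h.2
    rw [hM] at this
    omega
  · rw [rho_single_notmem M hM i l c h]
    exact map_zero (πlin hπm)

lemma rho_kill (hπm : IsPresentation πm (RelCyc F m)) (x : PathAlg F (CycV n))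
    (hx : x ∈ Finsupp.supported F F {p : PathIdx (CycV n) | n + 1 ≤ p.2.2.length}) :
    πm (rho (F := F) M hM x) = 0 := by
  have hle : Finsupp.supported F F {p : PathIdx (CycV n) | n + 1 ≤ p.2.2.length} ≤
      LinearMap.ker ((πlin hπm).comp (rho (F := F) M hM)) := by
    rw [Finsupp.supported_eq_span_single, Submodule.span_le]
    rintro y ⟨p, hp, rfl⟩
    rw [SetLike.mem_coe, LinearMap.mem_ker, LinearMap.comp_apply]
    exact pi_rho_single_long M hM hπm p hp 1
  exact hle hx

lemma wd (hπn : IsPresentation πn (RelCyc F n)) (hπm : IsPresentation πm (RelCyc F m))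
    (a : PathAlg F (CycV n)) (v : N) (hv : πn a = v) :
    πm (rho (F := F) M hM a) =
      πm (rho (F := F) M hM (Function.surjInv hπn.2.2.2.2.1 v)) := by
  set b := Function.surjInv hπn.2.2.2.2.1 v with hbdef
  have hb : πn b = v := Function.surjInv_eq hπn.2.2.2.2.1 v
  have hdiff : πn (a - b) = 0 := by
    have hsub : πlin hπn (a - b) = πlin hπn a - πlin hπn b := map_sub _ _ _
    show πlin hπn (a - b) = 0
    rw [hsub]
    show πn a - πn b = 0
    rw [hv, hb, sub_self]
  have hsupp := ker_supported hπn hdiff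
  have h0 : πm (rho (F := F) M hM (a - b)) = 0 := rho_kill M hM hπm _ hsupp
  have h1 : ((πlin hπm).comp (rho (F := F) M hM)) (a - b) = 0 := h0
  rw [map_sub] at h1
  have := sub_eq_zero.mp h1
  exact this

lemma pmul_eA_right (i : Fin n) (l : ℕ) (c : F) :
    pmul (Finsupp.single (toIdx i l) c) (eA F M) =
      if i + (l : Fin n) ∈ M then Finsupp.single (toIdx i l) c else 0 := by
  show pmulBil (Finsupp.single (toIdx i l) c) (eA F M) = _
  unfold eA
  rw [map_sum]
  have hterm : ∀ j ∈ M, pmulBil (Finsupp.single (toIdx i l) c) (Finsupp.single (toIdx j 0) 1)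
      = if j = i + (l : Fin n) then Finsupp.single (toIdx i l) c else 0 := by
    intro j _
    show pmul _ _ = _
    rw [pmul_toIdx_toIdx]
    split
    · norm_num
    · rfl
  rw [Finset.sum_congr rfl hterm, Finset.sum_ite_eq' M (i + (l : Fin n))
    (fun _ => Finsupp.single (toIdx i l) c)]

lemma pmul_eA_left (i : Fin n) (l : ℕ) (c : F) :
    pmul (eA F M) (Finsupp.single (toIdx i l) c) =
      if i ∈ M then Finsupp.single (toIdx i l) c else 0 := by
  show pmulBil.flip (Finsupp.single (toIdx i l) c) (eA F M) = _
  unfold eA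
  rw [map_sum]
  have hterm : ∀ j ∈ M, pmulBil.flip (Finsupp.single (toIdx i l) c) (Finsupp.single (toIdx j 0) 1)
      = if i = j then Finsupp.single (toIdx j l) c else 0 := by
    intro j _
    show pmul _ _ = _
    rw [pmul_toIdx_toIdx]
    have hc : (i = j + ((0:ℕ) : Fin n)) ↔ (i = j) := by norm_num
    by_cases hij : i = j
    · rw [if_pos (hc.mpr hij), if_pos hij]
      norm_num
    · rw [if_neg (fun hcon => hij (hc.mp hcon)), if_neg hij]
  rw [Finset.sum_congr rfl hterm, Finset.sum_ite_eq M i (fun j => Finsupp.single (toIdx j l) c)]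

lemma corner_idem (i : Fin n) (l : ℕ) (c : F) :
    pmul (eA F M) (pmul (Finsupp.single (toIdx i l) c) (eA F M)) =
      if i ∈ M ∧ i + (l : Fin n) ∈ M then Finsupp.single (toIdx i l) c else 0 := by
  rw [pmul_eA_right]
  by_cases h2 : i + (l : Fin n) ∈ M
  · rw [if_pos h2, pmul_eA_left]
    by_cases h1 : i ∈ M
    · rw [if_pos h1, if_pos ⟨h1, h2⟩]
    · rw [if_neg h1, if_neg (by tauto)]
  · rw [if_neg h2, pmul_zero_right, if_neg (by tauto)]

lemma e_sandwich (hπn : IsPresentation πn (RelCyc F n)) (a : PathAlg F (CycV n)) :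
    πn (pmul (eA F M) (pmul a (eA F M))) = πn (eA F M) * πn a * πn (eA F M) := by
  rw [hπn.2.2.1, hπn.2.2.1, mul_assoc]

/-- The corner projection. -/
noncomputable def cproj : PathAlg F (CycV n) →ₗ[F] PathAlg F (CycV n) :=
  Finsupp.lsum F fun p => LinearMap.toSpanSingleton F _
    (if p.1.t ∈ M ∧ p.2.1.t ∈ M ∧ p.2.2.length ≤ n then Finsupp.single p 1 else 0)

lemma cproj_single (p : PathIdx (CycV n)) (c : F) :
    cproj (F := F) M (Finsupp.single p c) =
      if p.1.t ∈ M ∧ p.2.1.t ∈ M ∧ p.2.2.length ≤ n then Finsupp.single p c else 0 := by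
  unfold cproj
  rw [Finsupp.lsum_single, LinearMap.toSpanSingleton_apply]
  split
  · rw [Finsupp.smul_single, smul_eq_mul, mul_one]
  · rw [smul_zero]

lemma cproj_supported (x : PathAlg F (CycV n)) :
    cproj (F := F) M x ∈ Finsupp.supported F F
      {p : PathIdx (CycV n) | p.1.t ∈ M ∧ p.2.1.t ∈ M ∧ p.2.2.length ≤ n} := by
  induction x using Finsupp.induction_linear with
  | zero => rw [map_zero]; exact Submodule.zero_mem _
  | add f g hf hg => rw [map_add]; exact Submodule.add_mem _ hf hg
  | single p c =>
    rw [cproj_single]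
    split
    · rename_i h
      exact Finsupp.single_mem_supported F c h
    · exact Submodule.zero_mem _

lemma rep (hπn : IsPresentation πn (RelCyc F n)) (x : N)
    (hx : πn (eA F M) * x * πn (eA F M) = x) :
    ∃ a, πn a = x ∧ a ∈ Finsupp.supported F F
      {p : PathIdx (CycV n) | p.1.t ∈ M ∧ p.2.1.t ∈ M ∧ p.2.2.length ≤ n} := by
  obtain ⟨a0, ha0⟩ := hπn.2.2.2.2.1 x
  refine ⟨cproj (F := F) M a0, ?_, cproj_supported M a0⟩
  have hmaps : (πlin hπn).comp (cproj (F := F) M) =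
      (πlin hπn).comp ((pmulBil (eA F M)).comp ((pmulBil (F := F) (V := CycV n)).flip (eA F M))) := by
    apply Finsupp.lhom_ext
    intro p c
    rw [LinearMap.comp_apply, LinearMap.comp_apply, LinearMap.comp_apply]
    show πn (cproj (F := F) M (Finsupp.single p c)) =
      πn (pmul (eA F M) (pmul (Finsupp.single p c) (eA F M)))
    rw [toIdx_class p]
    set i := p.1.t
    set l := p.2.2.length
    rw [cproj_single, corner_idem]
    have h1t : (toIdx i l).1.t = i := rfl
    have h2t : (toIdx i l).2.1.t = i + (l : Fin n) := rfl
    rw [h1t, h2t, toIdx_len]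
    by_cases hg : i ∈ M ∧ i + (l : Fin n) ∈ M
    · by_cases hl : l ≤ n
      · rw [if_pos ⟨hg.1, hg.2, hl⟩, if_pos hg]
      · rw [if_neg (by tauto), if_pos hg]
        have hz : πn (0 : PathAlg F (CycV n)) = 0 := map_zero (πlin hπn)
        rw [hz, π_long_zero hπn i l c (by omega)]
    · rw [if_neg (by tauto), if_neg hg]
  have happ := congrArg (fun L => L a0) hmaps
  simp only [LinearMap.comp_apply] at happ
  have happ2 : πn (cproj (F := F) M a0) = πn (pmul (eA F M) (pmul a0 (eA F M))) := happ
  rw [happ2, e_sandwich M hπn, ha0, hx]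

lemma key_mul (hπm : IsPresentation πm (RelCyc F m)) (i j : Fin n) (l k : ℕ)
    (hi : i ∈ M) (hil : i + (l : Fin n) ∈ M) (hj : j ∈ M) (hjk : j + (k : Fin n) ∈ M)
    (c d : F) :
    πm (rho (F := F) M hM (pmul (Finsupp.single (toIdx i l) c) (Finsupp.single (toIdx j k) d))) =
      πm (rho (F := F) M hM (Finsupp.single (toIdx i l) c)) *
        πm (rho (F := F) M hM (Finsupp.single (toIdx j k) d)) := by
  rw [rho_single_mem M hM i l c hi hil, rho_single_mem M hM j k d hj hjk,
    ← hπm.2.2.1, pmul_toIdx_toIdx, pmul_toIdx_toIdx]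
  by_cases hc : j = i + (l : Fin n)
  · rw [if_pos hc]
    have hidx : i + ((l + k : ℕ) : Fin n) = j + (k : Fin n) := by
      rw [hc]; push_cast; ring
    have hil2 : i + ((l + k : ℕ) : Fin n) ∈ M := by rw [hidx]; exact hjk
    rw [rho_single_mem M hM i (l+k) _ hi hil2]
    have hpos : posM M hM j hj = posM M hM i hi + ((cnt M i l : ℕ) : Fin m) := by
      rw [pos_walk M hM l i hi hil]
      exact posM_congr M hM hc hj hil
    rw [if_pos hpos]
    have hcnt : cnt M i (l + k) = cnt M i l + cnt M j k := by
      rw [cnt_add]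
      congr 1
      rw [← hc]
    rw [hcnt]
  · rw [if_neg hc]
    have hz1 : rho (F := F) M hM (0 : PathAlg F (CycV n)) = 0 := map_zero _
    have hz2 : πm (0 : PathAlg F (CycV m)) = 0 := map_zero (πlin hπm)
    rw [hz1, hz2]
    have hcond : ¬ (posM M hM j hj = posM M hM i hi + ((cnt M i l : ℕ) : Fin m)) := by
      intro hcon
      rw [pos_walk M hM l i hi hil] at hcon
      exact hc (posM_inj M hM hj hil hcon)
    rw [if_neg hcond, hz2]

/-- Index-level corner map. -/
noncomputable def fmap (p : PathIdx (CycV n)) : PathIdx (CycV m) :=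
  if h : p.1.t ∈ M then toIdx (posM M hM p.1.t h) (cnt M p.1.t p.2.2.length)
  else toIdx 0 0

lemma gmap_eq_fmap (p : PathIdx (CycV n)) (h1 : p.1.t ∈ M) (h2 : p.2.1.t ∈ M) :
    gmap (F := F) M hM p = Finsupp.single (fmap M hM p) 1 := by
  unfold gmap fmap
  rw [dif_pos ⟨h1, h2⟩, dif_pos h1]

lemma rho_eq_mapDomain (w : PathAlg F (CycV n))
    (hw : w ∈ Finsupp.supported F F
      {p : PathIdx (CycV n) | p.1.t ∈ M ∧ p.2.1.t ∈ M ∧ p.2.2.length ≤ n}) :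
    rho (F := F) M hM w = Finsupp.mapDomain (fmap M hM) w := by
  rw [Finsupp.mem_supported] at hw
  unfold rho
  rw [Finsupp.lsum_apply]
  unfold Finsupp.mapDomain
  apply Finsupp.sum_congr
  intro p hp
  have hpS := hw hp
  rw [LinearMap.toSpanSingleton_apply, gmap_eq_fmap M hM p hpS.1 hpS.2.1,
    Finsupp.smul_single, smul_eq_mul, mul_one]

lemma fmap_injOn : Set.InjOn (fmap M hM)
    {p : PathIdx (CycV n) | p.1.t ∈ M ∧ p.2.1.t ∈ M ∧ p.2.2.length ≤ n} := by
  intro p hp q hq heq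
  obtain ⟨hp1, hp2, hp3⟩ := hp
  obtain ⟨hq1, hq2, hq3⟩ := hq
  unfold fmap at heq
  rw [dif_pos hp1, dif_pos hq1] at heq
  obtain ⟨hfst, hlen⟩ := toIdx_inj heq
  have hij : p.1.t = q.1.t := posM_inj M hM hp1 hq1 hfst
  have hendp : p.2.1.t = p.1.t + ((p.2.2.length : ℕ) : Fin n) :=
    congrArg (fun r : PathIdx (CycV n) => r.2.1.t) (toIdx_class p)
  have hendq : q.2.1.t = q.1.t + ((q.2.2.length : ℕ) : Fin n) :=
    congrArg (fun r : PathIdx (CycV n) => r.2.1.t) (toIdx_class q)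
  rw [hendp] at hp2
  rw [hendq] at hq2
  rw [hij] at hlen
  have hll : p.2.2.length = q.2.2.length := by
    by_contra hne
    rcases Nat.lt_or_ge p.2.2.length q.2.2.length with hlt | hge
    · have := cnt_strict M q.1.t hlt hq2
      omega
    · have hlt2 : q.2.2.length < p.2.2.length := by omega
      rw [hij] at hp2
      have := cnt_strict M q.1.t hlt2 hp2
      omega
  rw [toIdx_class p, toIdx_class q, hij, hll]

lemma rho_supported_short (w : PathAlg F (CycV n))
    (hw : w ∈ Finsupp.supported F F
      {p : PathIdx (CycV n) | p.1.t ∈ M ∧ p.2.1.t ∈ M ∧ p.2.2.length ≤ n}) :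
    rho (F := F) M hM w ∈ Finsupp.supported F F {q : PathIdx (CycV m) | q.2.2.length ≤ m} := by
  have hle : Finsupp.supported F F
      {p : PathIdx (CycV n) | p.1.t ∈ M ∧ p.2.1.t ∈ M ∧ p.2.2.length ≤ n} ≤
      Submodule.comap (rho (F := F) M hM)
        (Finsupp.supported F F {q : PathIdx (CycV m) | q.2.2.length ≤ m}) := by
    rw [Finsupp.supported_eq_span_single, Submodule.span_le]
    rintro y ⟨p, hp, rfl⟩
    rw [SetLike.mem_coe, Submodule.mem_comap]
    obtain ⟨hp1, hp2, hp3⟩ := hp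
    have hendp : p.2.1.t = p.1.t + ((p.2.2.length : ℕ) : Fin n) :=
      congrArg (fun r : PathIdx (CycV n) => r.2.1.t) (toIdx_class p)
    rw [hendp] at hp2
    rw [toIdx_class p, rho_single_mem M hM _ _ _ hp1 hp2]
    apply Finsupp.single_mem_supported
    rw [Set.mem_setOf_eq, toIdx_len]
    have h1 := cnt_mono M p.1.t hp3
    rw [cnt_full, hM] at h1
    exact h1
  exact hle hw

lemma rho_inj_supported (w : PathAlg F (CycV n))
    (hw : w ∈ Finsupp.supported F F
      {p : PathIdx (CycV n) | p.1.t ∈ M ∧ p.2.1.t ∈ M ∧ p.2.2.length ≤ n})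
    (h0 : rho (F := F) M hM w = 0) : w = 0 := by
  rw [rho_eq_mapDomain M hM w hw] at h0
  have hinj := Finsupp.mapDomain_injOn
    {p : PathIdx (CycV n) | p.1.t ∈ M ∧ p.2.1.t ∈ M ∧ p.2.2.length ≤ n}
    (fmap_injOn M hM) (M := F)
  have hmem1 : w ∈ {w : PathAlg F (CycV n) |
      (w.support : Set (PathIdx (CycV n))) ⊆
        {p | p.1.t ∈ M ∧ p.2.1.t ∈ M ∧ p.2.2.length ≤ n}} :=
    Finsupp.mem_supported F w |>.mp hw
  have hmem2 : (0 : PathAlg F (CycV n)) ∈ {w : PathAlg F (CycV n) |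
      (w.support : Set (PathIdx (CycV n))) ⊆
        {p | p.1.t ∈ M ∧ p.2.1.t ∈ M ∧ p.2.2.length ≤ n}} := by
    simp [Set.mem_setOf_eq]
  apply hinj hmem1 hmem2
  rw [h0, Finsupp.mapDomain_zero]

lemma mul_compat (hπm : IsPresentation πm (RelCyc F m)) (a b : PathAlg F (CycV n))
    (ha : a ∈ Finsupp.supported F F
      {p : PathIdx (CycV n) | p.1.t ∈ M ∧ p.2.1.t ∈ M ∧ p.2.2.length ≤ n})
    (hb : b ∈ Finsupp.supported F F
      {p : PathIdx (CycV n) | p.1.t ∈ M ∧ p.2.1.t ∈ M ∧ p.2.2.length ≤ n}) :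
    πm (rho (F := F) M hM (pmul a b)) =
      πm (rho (F := F) M hM a) * πm (rho (F := F) M hM b) := by
  rw [Finsupp.supported_eq_span_single] at ha hb
  induction ha, hb using Submodule.span_induction₂ with
  | mem_mem x y hx hy =>
    obtain ⟨p, hp, rfl⟩ := hx
    obtain ⟨q, hq, rfl⟩ := hy
    obtain ⟨hp1, hp2, _⟩ := hp
    obtain ⟨hq1, hq2, _⟩ := hq
    have hendp : p.2.1.t = p.1.t + ((p.2.2.length : ℕ) : Fin n) :=
      congrArg (fun r : PathIdx (CycV n) => r.2.1.t) (toIdx_class p)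
    have hendq : q.2.1.t = q.1.t + ((q.2.2.length : ℕ) : Fin n) :=
      congrArg (fun r : PathIdx (CycV n) => r.2.1.t) (toIdx_class q)
    rw [hendp] at hp2
    rw [hendq] at hq2
    rw [toIdx_class p, toIdx_class q]
    exact key_mul M hM hπm _ _ _ _ hp1 hp2 hq1 hq2 1 1
  | zero_left y hy =>
    rw [pmul_zero_left, map_zero]
    have hz : πm (0 : PathAlg F (CycV m)) = 0 := map_zero (πlin hπm)
    rw [hz, zero_mul]
  | zero_right x hx =>
    rw [pmul_zero_right, map_zero]
    have hz : πm (0 : PathAlg F (CycV m)) = 0 := map_zero (πlin hπm)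
    rw [hz, mul_zero]
  | add_left x y z hx hy hz ihx ihy =>
    rw [pmul_add_left, map_add]
    have hadd : ∀ u v : PathAlg F (CycV m), πm (u + v) = πm u + πm v := hπm.1
    rw [hadd, ihx, ihy, map_add, hadd, add_mul]
  | add_right x y z hx hy hz ihy ihz =>
    rw [pmul_add_right, map_add]
    have hadd : ∀ u v : PathAlg F (CycV m), πm (u + v) = πm u + πm v := hπm.1
    rw [hadd, ihy, ihz, map_add, hadd, mul_add]
  | smul_left r x y hx hy ih =>
    rw [pmul_smul_left, map_smul]
    have hsm : ∀ (c : F) (u : PathAlg F (CycV m)), πm (c • u) = c • πm u := hπm.2.1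
    rw [hsm, ih, map_smul, hsm, smul_mul_assoc]
  | smul_right r x y hx hy ih =>
    rw [pmul_smul_right, map_smul]
    have hsm : ∀ (c : F) (u : PathAlg F (CycV m)), πm (c • u) = c • πm u := hπm.2.1
    rw [hsm, ih, map_smul, hsm, mul_smul_comm]

lemma rho_eA_pone : rho (F := F) M hM (eA F M) = pone F (CycV m) := by
  unfold eA
  rw [map_sum]
  have hstep : ∑ p : Fin m, Finsupp.single (toIdx p 0) (1 : F) =
      ∑ i ∈ M, rho (F := F) M hM (Finsupp.single (toIdx i 0) 1) := by
    apply Finset.sum_bij (fun (p : Fin m) _ => iot M hM p)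
    · intro p _
      exact iot_mem M hM p
    · intro p _ q _ h
      exact iot_inj M hM h
    · intro i hi
      exact ⟨posM M hM i hi, Finset.mem_univ _, iot_posM M hM i hi⟩
    · intro p _
      have hmem := iot_mem M hM p
      have hmem0 : iot M hM p + ((0:ℕ) : Fin n) ∈ M := by simpa using hmem
      rw [rho_single_mem M hM _ 0 1 hmem hmem0, cnt_zero, posM_iot]
  rw [← hstep]
  unfold pone
  apply Finset.sum_congr rfl
  intro p _
  rw [toIdx_zero]
  rfl

end Main

/-- Corner algebra: for `M ⊆ {1,…,n}` of cardinality `m` and `e = Σ_{i∈M} e_i`, the corner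
`e N_n e` of the symmetric Nakayama algebra `N_n` (cyclic quiver on `n` vertices modulo
paths of length `n+1`) is isomorphic to `N_m`. -/
theorem stmt_16 (F : Type) [Field F] (n m : ℕ) [NeZero n] [NeZero m]
    (N : Type) [Ring N] [Algebra F N]
    (πn : PathAlg F (CycV n) → N) (hπn : IsPresentation πn (RelCyc F n))
    (Nm : Type) [Ring Nm] [Algebra F Nm]
    (πm : PathAlg F (CycV m) → Nm) (hπm : IsPresentation πm (RelCyc F m))
    (M : Finset (Fin n)) (hM : M.card = m)
    (e : N)
    (he : e = πn (∑ i ∈ M, Finsupp.single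
        (⟨CycV.of i, CycV.of i, Quiver.Path.nil⟩ : PathIdx (CycV n)) 1)) :
    ∃ Φ : {x : N // e * x * e = x} → Nm,
      Function.Bijective Φ ∧
      (∀ x y z : {x : N // e * x * e = x}, z.val = x.val + y.val → Φ z = Φ x + Φ y) ∧
      (∀ (c : F) (x y : {x : N // e * x * e = x}), y.val = c • x.val → Φ y = c • Φ x) ∧
      (∀ x y z : {x : N // e * x * e = x}, z.val = x.val * y.val → Φ z = Φ x * Φ y) ∧
      (∀ x : {x : N // e * x * e = x}, x.val = e → Φ x = 1) := by
  classical
  have hsurjn := hπn.2.2.2.2.1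
  have heA : e = πn (eA F M) := by
    rw [he]
    congr 1
    unfold eA
    apply Finset.sum_congr rfl
    intro i _
    rw [toIdx_zero]
  set Φ : {x : N // e * x * e = x} → Nm :=
    fun x => πm (rho (F := F) M hM (Function.surjInv hsurjn x.val)) with hΦdef
  have hwd : ∀ (a : PathAlg F (CycV n)) (x : {x : N // e * x * e = x}),
      πn a = x.val → πm (rho (F := F) M hM a) = Φ x := by
    intro a x ha
    rw [hΦdef]
    exact wd M hM hπn hπm a x.val ha
  have hadd : ∀ x y z : {x : N // e * x * e = x},
      z.val = x.val + y.val → Φ z = Φ x + Φ y := by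
    intro x y z hz
    have hx' : πn (Function.surjInv hsurjn x.val) = x.val := Function.surjInv_eq hsurjn x.val
    have hy' : πn (Function.surjInv hsurjn y.val) = y.val := Function.surjInv_eq hsurjn y.val
    have hsum : πn (Function.surjInv hsurjn x.val + Function.surjInv hsurjn y.val) = z.val := by
      rw [hπn.1, hx', hy', hz]
    rw [← hwd _ z hsum, map_add]
    exact hπm.1 _ _
  have hsmul : ∀ (c : F) (x y : {x : N // e * x * e = x}),
      y.val = c • x.val → Φ y = c • Φ x := by
    intro c x y hy
    have hx' : πn (Function.surjInv hsurjn x.val) = x.val := Function.surjInv_eq hsurjn x.val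
    have hs : πn (c • Function.surjInv hsurjn x.val) = y.val := by
      rw [hπn.2.1, hx', hy]
    rw [← hwd _ y hs, map_smul]
    exact hπm.2.1 c _
  have hone : ∀ x : {x : N // e * x * e = x}, x.val = e → Φ x = 1 := by
    intro x hx
    have hv : πn (eA F M) = x.val := by rw [← heA, hx]
    rw [← hwd (eA F M) x hv, rho_eA_pone M hM, hπm.2.2.2.1]
  have hmul : ∀ x y z : {x : N // e * x * e = x},
      z.val = x.val * y.val → Φ z = Φ x * Φ y := by
    intro x y z hz
    have hxc : πn (eA F M) * x.val * πn (eA F M) = x.val := by rw [← heA]; exact x.prop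
    have hyc : πn (eA F M) * y.val * πn (eA F M) = y.val := by rw [← heA]; exact y.prop
    obtain ⟨a, ha, haS⟩ := rep M hπn x.val hxc
    obtain ⟨b, hb, hbS⟩ := rep M hπn y.val hyc
    have hab : πn (pmul a b) = z.val := by rw [hπn.2.2.1, ha, hb, hz]
    rw [← hwd _ z hab, ← hwd a x ha, ← hwd b y hb]
    exact mul_compat M hM hπm a b haS hbS
  have hinj : Function.Injective Φ := by
    intro x y hxy
    have hxc : πn (eA F M) * x.val * πn (eA F M) = x.val := by rw [← heA]; exact x.prop
    have hyc : πn (eA F M) * y.val * πn (eA F M) = y.val := by rw [← heA]; exact y.prop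
    obtain ⟨a, ha, haS⟩ := rep M hπn x.val hxc
    obtain ⟨b, hb, hbS⟩ := rep M hπn y.val hyc
    have h1 := hwd a x ha
    have h2 := hwd b y hb
    have heq : πm (rho (F := F) M hM a) = πm (rho (F := F) M hM b) := by
      rw [h1, h2, hxy]
    have h0 : πm (rho (F := F) M hM (a - b)) = 0 := by
      have h3 : rho (F := F) M hM (a - b) = rho (F := F) M hM a - rho (F := F) M hM b :=
        map_sub _ _ _
      have h4 : πm (rho (F := F) M hM a - rho (F := F) M hM b) =
          πm (rho (F := F) M hM a) - πm (rho (F := F) M hM b) := map_sub (πlin hπm) _ _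
      rw [h3, h4, heq, sub_self]
    have hsubm := Submodule.sub_mem _ haS hbS
    have hshort := rho_supported_short M hM _ hsubm
    have hρ0 : rho (F := F) M hM (a - b) = 0 := π_short_inj hπm hshort h0
    have hab0 : a - b = 0 := rho_inj_supported M hM _ hsubm hρ0
    apply Subtype.ext
    rw [← ha, ← hb, sub_eq_zero.mp hab0]
  have hzeroΦ : ∃ x, Φ x = 0 := by
    refine ⟨⟨0, by rw [mul_zero, zero_mul]⟩, ?_⟩
    have h := hadd ⟨0, by rw [mul_zero, zero_mul]⟩ ⟨0, by rw [mul_zero, zero_mul]⟩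
      ⟨0, by rw [mul_zero, zero_mul]⟩ (by show (0:N) = 0 + 0; rw [add_zero])
    exact (left_eq_add.mp h)
  have hsingle : ∀ (q : PathIdx (CycV m)) (c : F), ∃ x, Φ x = πm (Finsupp.single q c) := by
    intro q c
    rw [toIdx_class q]
    by_cases hk : q.2.2.length ≤ m
    · obtain ⟨l, hln, hcnt, hend⟩ := cnt_exists M (iot M hM q.1.t) (iot_mem M hM q.1.t)
        (k := q.2.2.length) (by rw [hM]; exact hk)
      have hcorner : e * πn (Finsupp.single (toIdx (iot M hM q.1.t) l) c) * e =
          πn (Finsupp.single (toIdx (iot M hM q.1.t) l) c) := by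
        rw [heA, ← e_sandwich M hπn, corner_idem, if_pos ⟨iot_mem M hM q.1.t, hend⟩]
      refine ⟨⟨πn (Finsupp.single (toIdx (iot M hM q.1.t) l) c), hcorner⟩, ?_⟩
      rw [← hwd _ _ rfl, rho_single_mem M hM _ l c (iot_mem M hM q.1.t) hend, posM_iot, hcnt]
    · obtain ⟨x0, hx0⟩ := hzeroΦ
      refine ⟨x0, ?_⟩
      rw [hx0, π_long_zero hπm q.1.t q.2.2.length c (by omega)]
  have hsurj : Function.Surjective Φ := by
    intro y
    obtain ⟨b0, hb0⟩ := hπm.2.2.2.2.1 y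
    rw [← hb0]
    clear hb0
    induction b0 using Finsupp.induction_linear with
    | zero =>
      obtain ⟨x0, hx0⟩ := hzeroΦ
      have hz : πm (0 : PathAlg F (CycV m)) = 0 := map_zero (πlin hπm)
      exact ⟨x0, by rw [hx0, hz]⟩
    | add f g hf hg =>
      obtain ⟨xf, hxf⟩ := hf
      obtain ⟨xg, hxg⟩ := hg
      refine ⟨⟨xf.val + xg.val, by rw [mul_add, add_mul, xf.prop, xg.prop]⟩, ?_⟩
      rw [hπm.1, ← hxf, ← hxg]
      exact hadd xf xg _ rfl
    | single q c => exact hsingle q c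
  exact ⟨Φ, ⟨hinj, hsurj⟩, hadd, hsmul, hmul, hone⟩
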